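/- For a rooted tree G=(V,E), the set conv(Z), where Z = { z ∈ {0,1}^V : z_v z_{v'} = 0 for all v ∈ V and all ancestors v' of v }, equals { γ ∈ [0,1]^V : for every v ∈ V, the sum of γ_{v'} over v' in the set consisting of v and all its ancestors is at most 1 }. -/

import Mathlib

open Finset

def ancestors {n : ℕ} [NeZero n] (par : Fin n → Fin n) (hpar : ∀ v, v ≠ 0 → par v < v) :
    Fin n → Finset (Fin n) :=
  fun v =>
    if h : v = 0 then ∅ else insert (par v) (ancestors par hpar (par v))
termination_by v => (v : ℕ)
decreasing_by exact hpar _ h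

/-- `v` together with its strict ancestors. -/
def barA {n : ℕ} [NeZero n] (par : Fin n → Fin n) (hpar : ∀ v, v ≠ 0 → par v < v)
    (v : Fin n) : Finset (Fin n) :=
  insert v (ancestors par hpar v)

/-- `v` together with its descendants. -/
def barD {n : ℕ} [NeZero n] (par : Fin n → Fin n) (hpar : ∀ v, v ≠ 0 → par v < v)
    (v : Fin n) : Finset (Fin n) :=
  Finset.univ.filter (fun w => v ∈ barA par hpar w)

/-- strict descendants of `v`. -/
def strictD {n : ℕ} [NeZero n] (par : Fin n → Fin n) (hpar : ∀ v, v ≠ 0 → par v < v)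
    (v : Fin n) : Finset (Fin n) :=
  Finset.univ.filter (fun w => v ∈ ancestors par hpar w)

/-- children of `v`. -/
def children {n : ℕ} [NeZero n] (par : Fin n → Fin n) (v : Fin n) : Finset (Fin n) :=
  Finset.univ.filter (fun w => w ≠ 0 ∧ par w = v)

section
variable {n : ℕ} [NeZero n] (par : Fin n → Fin n) (hpar : ∀ v, v ≠ 0 → par v < v)

lemma ancestors_eq (v : Fin n) :
    ancestors par hpar v
      = if h : v = 0 then ∅ else insert (par v) (ancestors par hpar (par v)) := by
  rw [ancestors]

lemma mem_ancestors_lt : ∀ v w : Fin n, w ∈ ancestors par hpar v → w < v := by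
  have H : ∀ N : ℕ, ∀ v : Fin n, (v : ℕ) < N → ∀ w, w ∈ ancestors par hpar v → w < v := by
    intro N
    induction N with
    | zero => omega
    | succ N ih =>
      intro v hv w hw
      rw [ancestors_eq] at hw
      by_cases h : v = 0
      · simp [h] at hw
      · rw [dif_neg h, Finset.mem_insert] at hw
        rcases hw with rfl | hw
        · exact hpar v h
        · exact lt_trans (ih (par v) (by have := hpar v h; omega) w hw) (hpar v h)
  intro v; exact H (v + 1) v (by omega)

lemma not_mem_ancestors_self (v : Fin n) : v ∉ ancestors par hpar v :=
  fun h => lt_irrefl v (mem_ancestors_lt par hpar v v h)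

lemma ancestors_mono : ∀ v v' : Fin n, v' ∈ ancestors par hpar v →
    ancestors par hpar v' ⊆ ancestors par hpar v := by
  have H : ∀ N : ℕ, ∀ v : Fin n, (v : ℕ) < N → ∀ v', v' ∈ ancestors par hpar v →
      ancestors par hpar v' ⊆ ancestors par hpar v := by
    intro N
    induction N with
    | zero => omega
    | succ N ih =>
      intro v hv v' hv'
      rw [ancestors_eq par hpar v] at hv' ⊢
      by_cases h : v = 0
      · simp [h] at hv'
      · rw [dif_neg h] at hv' ⊢
        rw [Finset.mem_insert] at hv'
        rcases hv' with rfl | hv'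
        · exact Finset.subset_insert _ _
        · exact (ih (par v) (by have := hpar v h; omega) v' hv').trans
            (Finset.subset_insert _ _)
  intro v; exact H (v + 1) v (by omega)

lemma barA_subset_ancestors {v v' : Fin n} (h : v' ∈ ancestors par hpar v) :
    barA par hpar v' ⊆ ancestors par hpar v :=
  Finset.insert_subset h (ancestors_mono par hpar v v' h)

lemma ancestors_eq_barA_par {v : Fin n} (h : v ≠ 0) :
    ancestors par hpar v = barA par hpar (par v) := by
  rw [ancestors_eq, dif_neg h]; rfl

lemma sum_barA_le_of_mem (z : Fin n → ℝ) (h0 : ∀ v, z v = 0 ∨ z v = 1)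
    (hz : ∀ v, ∀ v' ∈ ancestors par hpar v, z v * z v' = 0) :
    ∀ v, ∑ v' ∈ barA par hpar v, z v' ≤ 1 := by
  have H : ∀ N : ℕ, ∀ v : Fin n, (v : ℕ) < N → ∑ v' ∈ barA par hpar v, z v' ≤ 1 := by
    intro N
    induction N with
    | zero => omega
    | succ N ih =>
      intro v hv
      rw [barA, Finset.sum_insert (not_mem_ancestors_self par hpar v)]
      rcases h0 v with hzv | hzv
      · rw [hzv, zero_add]
        by_cases h : v = 0
        · rw [ancestors_eq, dif_pos h]; simp
        · rw [ancestors_eq_barA_par par hpar h]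
          exact ih (par v) (by have := hpar v h; omega)
      · have hz0 : ∀ v' ∈ ancestors par hpar v, z v' = 0 := by
          intro v' hv'
          have h1 := hz v v' hv'
          rw [hzv, one_mul] at h1; exact h1
        rw [Finset.sum_eq_zero hz0, hzv]; norm_num
  intro v; exact H (v + 1) v (by omega)

end

/-- The convex hull of the set `Z` of 0/1 activation vectors with no two beams in an
ancestor–descendant relation simultaneously active equals the polytope of
`γ ∈ [0,1]^V` with `∑_{v' ∈ Ā(v)} γ_{v'} ≤ 1` for all `v`. -/
theorem convexHull_admissible_activations {n : ℕ} [NeZero n] (par : Fin n → Fin n)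
    (hpar : ∀ v, v ≠ 0 → par v < v) :
    convexHull ℝ
      {z : Fin n → ℝ | (∀ v, z v = 0 ∨ z v = 1) ∧
        ∀ v, ∀ v' ∈ ancestors par hpar v, z v * z v' = 0} =
    {γ : Fin n → ℝ | (∀ v, 0 ≤ γ v ∧ γ v ≤ 1) ∧
        ∀ v, ∑ v' ∈ barA par hpar v, γ v' ≤ 1} := by
  apply Set.Subset.antisymm
  · apply convexHull_min
    · rintro z ⟨h0, hz⟩
      refine ⟨fun v => ?_, sum_barA_le_of_mem par hpar z h0 hz⟩
      rcases h0 v with h | h <;> simp [h]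
    · rintro x hx y hy a b ha hb hab
      refine ⟨fun v => ?_, fun v => ?_⟩
      · have h1 := hx.1 v; have h2 := hy.1 v
        simp only [Pi.add_apply, Pi.smul_apply, smul_eq_mul]
        constructor
        · have := mul_nonneg ha h1.1; have := mul_nonneg hb h2.1; linarith
        · have := mul_le_mul_of_nonneg_left h1.2 ha
          have := mul_le_mul_of_nonneg_left h2.2 hb
          linarith
      · simp only [Pi.add_apply, Pi.smul_apply, smul_eq_mul]
        rw [Finset.sum_add_distrib, ← Finset.mul_sum, ← Finset.mul_sum]
        have := mul_le_mul_of_nonneg_left (hx.2 v) ha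
        have := mul_le_mul_of_nonneg_left (hy.2 v) hb
        linarith
  · rintro γ ⟨hγ01, hγsum⟩
    set S : Fin n → ℝ := fun v => ∑ v' ∈ barA par hpar v, γ v' with hSdef
    set Sa : Fin n → ℝ := fun v => ∑ v' ∈ ancestors par hpar v, γ v' with hSadef
    have hsplit : ∀ v, S v = γ v + Sa v := fun v =>
      Finset.sum_insert (not_mem_ancestors_self par hpar v)
    have hSa_nonneg : ∀ v, 0 ≤ Sa v := fun v =>
      Finset.sum_nonneg fun i _ => (hγ01 i).1
    have hS_le_one : ∀ v, S v ≤ 1 := hγsum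
    have hSa_le_S : ∀ v, Sa v ≤ S v := fun v => by
      have := (hγ01 v).1; rw [hsplit]; linarith
    have key : ∀ v v', v' ∈ ancestors par hpar v → S v' ≤ Sa v := fun v v' h =>
      Finset.sum_le_sum_of_subset_of_nonneg (barA_subset_ancestors par hpar h)
        (fun i _ _ => (hγ01 i).1)
    set B : Finset ℝ :=
      insert 0 (insert 1 (Finset.image S Finset.univ ∪ Finset.image Sa Finset.univ)) with hBdef
    have h0B : (0 : ℝ) ∈ B := by simp [hBdef]
    have h1B : (1 : ℝ) ∈ B := by simp [hBdef]
    have hSB : ∀ v, S v ∈ B := fun v => by simp [hBdef]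
    have hSaB : ∀ v, Sa v ∈ B := fun v => by simp [hBdef]
    have hBrange : ∀ x ∈ B, 0 ≤ x ∧ x ≤ 1 := by
      intro x hx
      simp only [hBdef, Finset.mem_insert, Finset.mem_union, Finset.mem_image,
        Finset.mem_univ, true_and] at hx
      rcases hx with rfl | rfl | ⟨v, rfl⟩ | ⟨v, rfl⟩
      · norm_num
      · norm_num
      · exact ⟨le_trans (hSa_nonneg v) (hSa_le_S v), hS_le_one v⟩
      · exact ⟨hSa_nonneg v, le_trans (hSa_le_S v) (hS_le_one v)⟩
    have hne : B.Nonempty := ⟨0, h0B⟩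
    set L : List ℝ := B.sort (· ≤ ·) with hLdef
    set k : ℕ := L.length with hkdef
    have hkcard : k = B.card := Finset.length_sort _
    have hk2 : 2 ≤ k := by
      rw [hkcard]
      have : ({0, 1} : Finset ℝ) ⊆ B := by
        intro x hx; simp at hx; rcases hx with rfl | rfl; exacts [h0B, h1B]
      calc 2 = ({0, 1} : Finset ℝ).card := by norm_num
        _ ≤ B.card := Finset.card_le_card this
    set ℓ : ℕ → ℝ := fun i => L.getD i 0 with hℓdef
    have hget : ∀ i (h : i < k), ℓ i = L.get ⟨i, h⟩ := by
      intro i h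
      simp only [hℓdef, List.getD_eq_getElem L 0 h, List.get_eq_getElem]
    have hsm : StrictMono L.get := (Finset.sortedLT_sort B).strictMono_get
    have hmemL : ∀ x ∈ B, ∃ a : Fin k, L.get a = x := by
      intro x hx
      have : x ∈ L := (Finset.mem_sort _).mpr hx
      exact List.mem_iff_get.mp this
    have hlen : 0 < (Finset.sort B (· ≤ ·)).length := by rw [← hLdef, ← hkdef]; omega
    have hℓ0 : ℓ 0 = 0 := by
      rw [hget 0 (by omega)]
      have hmin : B.min' hne = 0 :=
        le_antisymm (Finset.min'_le _ _ h0B) (Finset.le_min' _ _ _ fun y hy => (hBrange y hy).1)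
      rw [← hmin]
      exact Finset.sorted_zero_eq_min' (h := hlen)
    have hℓlast : ℓ (k - 1) = 1 := by
      rw [hget (k - 1) (by omega)]
      have hmax : B.max' hne = 1 :=
        le_antisymm (Finset.max'_le _ _ _ fun y hy => (hBrange y hy).2) (Finset.le_max' _ _ h1B)
      rw [← hmax]
      exact Finset.sorted_last_eq_max' (h := by rw [← hLdef, ← hkdef]; omega)
    set w : ℕ → ℝ := fun i => ℓ (i + 1) - ℓ i with hwdef
    set p : ℕ → Fin n → ℝ :=
      fun i v => if Sa v ≤ ℓ i ∧ ℓ i < S v then 1 else 0 with hpdef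
    have hwnn : ∀ i ∈ Finset.range (k - 1), 0 ≤ w i := by
      intro i hi
      rw [Finset.mem_range] at hi
      have h1 : i < k := by omega
      have h2 : i + 1 < k := by omega
      have h3 : ℓ i ≤ ℓ (i + 1) := by
        rw [hget i h1, hget (i + 1) h2]
        exact hsm.monotone (by simp [Fin.le_def])
      simp only [hwdef]
      linarith
    have hw1 : ∑ i ∈ Finset.range (k - 1), w i = 1 := by
      simp only [hwdef]
      rw [Finset.sum_range_sub ℓ (k - 1), hℓ0, hℓlast]
      ring
    have hmemZ : ∀ i ∈ Finset.range (k - 1),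
        p i ∈ {z : Fin n → ℝ | (∀ v, z v = 0 ∨ z v = 1) ∧
          ∀ v, ∀ v' ∈ ancestors par hpar v, z v * z v' = 0} := by
      intro i _
      constructor
      · intro v; simp only [hpdef]; split_ifs <;> simp
      · intro v v' hv'
        simp only [hpdef]
        split_ifs with h1 h2
        · exfalso
          have := key v v' hv'
          linarith [h1.1, h2.2]
        all_goals simp
    have hdecomp : γ = ∑ i ∈ Finset.range (k - 1), w i • p i := by
      funext v
      rw [Finset.sum_apply]
      simp only [Pi.smul_apply, smul_eq_mul]
      obtain ⟨a, ha⟩ := hmemL (Sa v) (hSaB v)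
      obtain ⟨b, hb⟩ := hmemL (S v) (hSB v)
      have hab : (a : ℕ) ≤ (b : ℕ) := by
        by_contra hcon
        push_neg at hcon
        have := hsm (show b < a from hcon)
        rw [ha, hb] at this
        linarith [hSa_le_S v]
      have hstep : ∀ i ∈ Finset.range (k - 1),
          w i * p i v = if Sa v ≤ ℓ i ∧ ℓ i < S v then w i else 0 := by
        intro i _
        simp only [hpdef, mul_ite, mul_one, mul_zero]
      rw [Finset.sum_congr rfl hstep, ← Finset.sum_filter]
      have hfilter : (Finset.range (k - 1)).filter (fun i => Sa v ≤ ℓ i ∧ ℓ i < S v)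
          = Finset.Ico (a : ℕ) (b : ℕ) := by
        ext i
        simp only [Finset.mem_filter, Finset.mem_range, Finset.mem_Ico]
        constructor
        · rintro ⟨hik, hC1, hC2⟩
          have hik' : i < k := by omega
          rw [hget i hik'] at hC1 hC2
          constructor
          · by_contra hia
            push_neg at hia
            have := hsm (show (⟨i, hik'⟩ : Fin k) < a from hia)
            rw [ha] at this
            simp only [List.get_eq_getElem] at this hC1
            linarith
          · by_contra hib
            push_neg at hib
            have := hsm.monotone (show b ≤ (⟨i, hik'⟩ : Fin k) from hib)
            rw [hb] at this
            simp only [List.get_eq_getElem] at this hC2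
            linarith
        · rintro ⟨hai, hib⟩
          have hbk : (b : ℕ) < k := b.isLt
          have hik : i < k - 1 := by omega
          have hik' : i < k := by omega
          refine ⟨hik, ?_, ?_⟩
          · have := hsm.monotone (show a ≤ (⟨i, hik'⟩ : Fin k) from hai)
            rw [ha] at this
            rw [hget i hik']
            simpa using this
          · have := hsm (show (⟨i, hik'⟩ : Fin k) < b from hib)
            rw [hb] at this
            rw [hget i hik']
            simpa using this
      rw [hfilter]
      simp only [hwdef]
      rw [Finset.sum_Ico_eq_sub _ hab, Finset.sum_range_sub ℓ, Finset.sum_range_sub ℓ]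
      have hℓa : ℓ (a : ℕ) = Sa v := by rw [hget _ a.isLt]; simpa using ha
      have hℓb : ℓ (b : ℕ) = S v := by rw [hget _ b.isLt]; simpa using hb
      rw [hℓa, hℓb]
      have := hsplit v
      linarith
    rw [hdecomp]
    exact (convex_convexHull ℝ _).sum_mem hwnn hw1
      (fun i hi => subset_convexHull ℝ _ (hmemZ i hi))
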